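/- Let x ∈ K^n, v a rational point with associated integer vector v ∈ F_q[X]^{n+1}. For t ∈ Z, ||g_t u_x v|| = H(v) · max(e^{-nt}, e^t · d(x, v)). Consequently |⟨e_1, g_t u_x v⟩| = ||g_t u_x v|| holds if and only if t ≤ -(1/(n+1)) log d(x, v) (when d(x,v) > 0). -/

import Mathlib

open scoped Classical ENNReal
noncomputable section

/-- The absolute value on `K = 𝔽_q((X⁻¹))`, modelled as Laurent series in `T = X⁻¹`:
`|x| = e^{-(order of x)}`, so that `|X| = e`. -/
def kabs {Fq : Type} [Field Fq] (x : LaurentSeries Fq) : ℝ :=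
  if x = 0 then 0 else Real.exp (-(x.order : ℝ))

lemma kabs_nonneg {Fq : Type} [Field Fq] (x : LaurentSeries Fq) : 0 ≤ kabs x := by
  unfold kabs; split <;> positivity

lemma kabs_eq_zero {Fq : Type} [Field Fq] {x : LaurentSeries Fq} :
    kabs x = 0 ↔ x = 0 := by
  unfold kabs; split
  · simp_all
  · simp_all [Real.exp_ne_zero]

lemma kabs_neg {Fq : Type} [Field Fq] (x : LaurentSeries Fq) : kabs (-x) = kabs x := by
  unfold kabs
  simp [HahnSeries.order_neg, neg_eq_zero]

lemma kabs_add_le {Fq : Type} [Field Fq] (x y : LaurentSeries Fq) :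
    kabs (x + y) ≤ max (kabs x) (kabs y) := by
  by_cases hx : x = 0
  · simp [hx, le_max_iff, le_refl]
  by_cases hy : y = 0
  · simp [hy, le_max_iff, le_refl]
  by_cases hxy : x + y = 0
  · simp only [hxy, kabs, if_pos rfl, le_max_iff]
    left; exact kabs_nonneg x |>.trans (by simp [kabs, hx, le_refl])
  · have h := HahnSeries.min_order_le_order_add hxy
    simp only [kabs, if_neg hx, if_neg hy, if_neg hxy, le_max_iff]
    rcases le_total x.order y.order with h' | h'
    · left
      apply Real.exp_le_exp.2
      have : x.order ≤ (x + y).order := le_trans (by simp [min_eq_left h']) h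
      have h2 : (x.order : ℝ) ≤ ((x + y).order : ℝ) := by exact_mod_cast this
      linarith
    · right
      apply Real.exp_le_exp.2
      have : y.order ≤ (x + y).order := le_trans (by simp [min_eq_right h']) h
      have h2 : (y.order : ℝ) ≤ ((x + y).order : ℝ) := by exact_mod_cast this
      linarith

instance (priority := 10000) kMetric (Fq : Type) [Field Fq] :
    MetricSpace (LaurentSeries Fq) where
  dist x y := kabs (x - y)
  dist_self x := by simp [kabs]
  dist_comm x y := by
    show kabs (x - y) = kabs (y - x)
    have h : x - y = -(y - x) := by ring
    rw [h, kabs_neg]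
  dist_triangle x y z := by
    have h := kabs_add_le (x - y) (y - z)
    rw [sub_add_sub_cancel] at h
    exact h.trans (max_le (le_add_of_nonneg_right (kabs_nonneg _))
      (le_add_of_nonneg_left (kabs_nonneg _)))
  eq_of_dist_eq_zero h := sub_eq_zero.mp (kabs_eq_zero.mp h)

/-- The embedding of `𝔽_q[X]` into `K`, sending `X` to `T⁻¹`. -/
def polyK (Fq : Type) [Field Fq] : Polynomial Fq →+* LaurentSeries Fq :=
  (Polynomial.aeval (HahnSeries.single (-1 : ℤ) (1 : Fq))).toRingHom

/-- The element `X` of `K`. -/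
def Xe (Fq : Type) [Field Fq] : LaurentSeries Fq := HahnSeries.single (-1 : ℤ) 1

/-- Sup norm on `K^m`. -/
def supNorm {Fq : Type} [Field Fq] {m : ℕ} (v : Fin m → LaurentSeries Fq) : ℝ :=
  ⨆ i, kabs (v i)

/-- The diagonal flow `g_t = diag(X^{-nt}, X^t, …, X^t)`. -/
def gMat (Fq : Type) [Field Fq] (n : ℕ) (t : ℤ) :
    Matrix (Fin (n+1)) (Fin (n+1)) (LaurentSeries Fq) :=
  Matrix.diagonal (fun i => if i = 0 then Xe Fq ^ (-(n : ℤ) * t) else Xe Fq ^ t)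

/-- The unipotent matrix `u_x` with first column `(1, -x_1, …, -x_n)ᵀ`. -/
def uMat {Fq : Type} [Field Fq] {n : ℕ} (x : Fin n → LaurentSeries Fq) :
    Matrix (Fin (n+1)) (Fin (n+1)) (LaurentSeries Fq) :=
  Matrix.of fun i j =>
    if i = j then 1 else if hi : i = 0 then 0 else if j = 0 then -x (i.pred hi) else 0

/-- The integer vector `(g, f_1, …, f_n)` associated to a rational point. -/
def assocVec {Fq : Type} [Field Fq] {n : ℕ} (f : Fin n → Polynomial Fq)
    (g : Polynomial Fq) : Fin (n+1) → LaurentSeries Fq :=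
  Fin.cons (polyK Fq g) fun i => polyK Fq (f i)

/-- The height `H(v) = max(|g|, |f_1|, …, |f_n|)`. -/
def height {Fq : Type} [Field Fq] {n : ℕ} (f : Fin n → Polynomial Fq)
    (g : Polynomial Fq) : ℝ :=
  supNorm (assocVec f g)

/-- The rational point `(f_1/g, …, f_n/g) ∈ K^n`. -/
def ratPt {Fq : Type} [Field Fq] {n : ℕ} (f : Fin n → Polynomial Fq)
    (g : Polynomial Fq) : Fin n → LaurentSeries Fq :=
  fun i => polyK Fq (f i) / polyK Fq g

/-- Points of the lattice `A · 𝔽_q[X]^m` in `K^m`. -/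
def latticePts {Fq : Type} [Field Fq] {m : ℕ}
    (A : Matrix (Fin m) (Fin m) (LaurentSeries Fq)) :
    Set (Fin m → LaurentSeries Fq) :=
  {w | ∃ p : Fin m → Polynomial Fq, w = A.mulVec fun i => polyK Fq (p i)}

/-- First minimum of the lattice `A · 𝔽_q[X]^m`. -/
def lambda1 {Fq : Type} [Field Fq] {m : ℕ}
    (A : Matrix (Fin m) (Fin m) (LaurentSeries Fq)) : ℝ :=
  sInf {r | ∃ w ∈ latticePts A, w ≠ 0 ∧ r = supNorm w}

/-- `i`-th successive minimum of the lattice `A · 𝔽_q[X]^m`. -/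
def succMin {Fq : Type} [Field Fq] {m : ℕ}
    (A : Matrix (Fin m) (Fin m) (LaurentSeries Fq)) (i : ℕ) : ℝ :=
  sInf {r | ∃ v : Fin i → (Fin m → LaurentSeries Fq),
    (∀ j, v j ∈ latticePts A) ∧ LinearIndependent (LaurentSeries Fq) v ∧
    ∀ j, supNorm (v j) ≤ r}

/-- `x` is `ψ`-approximable. -/
def IsPsiApprox {Fq : Type} [Field Fq] {n : ℕ} (ψ : ℝ → ℝ)
    (x : Fin n → LaurentSeries Fq) : Prop :=
  {fg : (Fin n → Polynomial Fq) × Polynomial Fq | fg.2 ≠ 0 ∧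
    supNorm (fun i => x i - polyK Fq (fg.1 i) / polyK Fq fg.2) <
      ψ (kabs (polyK Fq fg.2))}.Infinite

/-- The set `Exact(ψ)` in the ultrametric formulation. -/
def ExactSet (Fq : Type) [Field Fq] (n : ℕ) (ψ : ℝ → ℝ) :
    Set (Fin n → LaurentSeries Fq) :=
  {x | (∀ i, kabs (x i) ≤ 1) ∧
    {fg : (Fin n → Polynomial Fq) × Polynomial Fq | fg.2 ≠ 0 ∧
      supNorm (fun i => x i - polyK Fq (fg.1 i) / polyK Fq fg.2) =
        ψ (kabs (polyK Fq fg.2))}.Infinite ∧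
    ∃ G : ℝ, ∀ (f : Fin n → Polynomial Fq) (g : Polynomial Fq), g ≠ 0 →
      G ≤ kabs (polyK Fq g) →
      ψ (kabs (polyK Fq g)) ≤ supNorm fun i => x i - polyK Fq (f i) / polyK Fq g}

/-- The lower order of infinity `λ_ψ` of `ψ`. -/
def lambdaPsi (ψ : ℝ → ℝ) : ℝ≥0∞ :=
  Filter.liminf (fun s => ENNReal.ofReal (-Real.log (ψ s) / Real.log s)) Filter.atTop

section Helpers
variable {Fq : Type} [Field Fq]

lemma kabs_mul (x y : LaurentSeries Fq) : kabs (x * y) = kabs x * kabs y := by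
  by_cases hx : x = 0; · simp [hx, kabs]
  by_cases hy : y = 0; · simp [hy, kabs]
  have hxy : x * y ≠ 0 := mul_ne_zero hx hy
  simp only [kabs, if_neg hx, if_neg hy, if_neg hxy, HahnSeries.order_mul hx hy,
    ← Real.exp_add]
  push_cast; ring_nf

lemma polyK_eq_sum (p : Polynomial Fq) :
    polyK Fq p = ∑ k ∈ p.support, HahnSeries.single (-(k : ℤ)) (p.coeff k) := by
  rw [polyK]
  simp only [AlgHom.toRingHom_eq_coe, RingHom.coe_coe, Polynomial.aeval_def,
    Polynomial.eval₂_eq_sum, Polynomial.sum]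
  refine Finset.sum_congr rfl fun k _ => ?_
  rw [HahnSeries.single_pow,
    show (algebraMap Fq (HahnSeries ℤ Fq)) (p.coeff k) = HahnSeries.single (0:ℤ) (p.coeff k)
      by
        rw [HahnSeries.algebraMap_apply', PowerSeries.algebraMap_apply]
        simp [HahnSeries.ofPowerSeries_C, HahnSeries.C_apply],
    HahnSeries.single_mul_single]
  simp

lemma polyK_coeff (p : Polynomial Fq) (j : ℤ) :
    (polyK Fq p).coeff j = if 0 ≤ -j then p.coeff (-j).toNat else 0 := by
  rw [polyK_eq_sum]
  rw [show (∑ k ∈ p.support, HahnSeries.single (-(k : ℤ)) (p.coeff k)).coeff j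
    = (HahnSeries.coeff.addMonoidHom j) (∑ k ∈ p.support,
        HahnSeries.single (-(k : ℤ)) (p.coeff k)) from rfl,
    map_sum (HahnSeries.coeff.addMonoidHom j)]
  simp only [HahnSeries.coeff.addMonoidHom, AddMonoidHom.coe_mk, ZeroHom.coe_mk,
    HahnSeries.coeff_single]
  by_cases hj : 0 ≤ -j
  · rcases Int.eq_ofNat_of_zero_le hj with ⟨m, hm⟩
    have hjm : j = -(m : ℤ) := by omega
    subst hjm
    rw [if_pos hj]
    by_cases hmem : m ∈ p.support
    · rw [Finset.sum_eq_single m]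
      · simp
      · intro k _ hk
        rw [if_neg]; omega
      · intro h; exact absurd hmem h
    · have : p.coeff m = 0 := Polynomial.notMem_support_iff.mp hmem
      rw [Finset.sum_eq_zero]
      · simp [this]
      · intro k hk
        rw [if_neg]
        intro hc
        have : k = m := by omega
        subst this; exact hmem hk
  · rw [if_neg hj]
    refine Finset.sum_eq_zero fun k _ => ?_
    rw [if_neg]; omega

lemma polyK_order {p : Polynomial Fq} (hp : p ≠ 0) :
    polyK Fq p ≠ 0 ∧ (polyK Fq p).order = -(p.natDegree : ℤ) := by
  have hlc : (polyK Fq p).coeff (-(p.natDegree : ℤ)) ≠ 0 := by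
    rw [polyK_coeff, if_pos (by omega)]
    simpa using Polynomial.leadingCoeff_ne_zero.mpr hp
  have hne : polyK Fq p ≠ 0 := HahnSeries.ne_zero_of_coeff_ne_zero hlc
  refine ⟨hne, le_antisymm (HahnSeries.order_le_of_coeff_ne_zero hlc) ?_⟩
  by_contra hlt
  push_neg at hlt
  have := mt HahnSeries.coeff_order_eq_zero.mp hne
  rw [polyK_coeff] at this
  rcases lt_or_ge 0 (-(polyK Fq p).order) with h | h
  · rw [if_pos h.le] at this
    exact this (Polynomial.coeff_eq_zero_of_natDegree_lt (by omega))
  · rw [if_neg (by omega)] at this; exact this rfl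

lemma polyK_ne_zero {p : Polynomial Fq} (hp : p ≠ 0) : polyK Fq p ≠ 0 :=
  (polyK_order hp).1

lemma kabs_polyK {p : Polynomial Fq} (hp : p ≠ 0) :
    kabs (polyK Fq p) = Real.exp (p.natDegree : ℝ) := by
  rw [kabs, if_neg (polyK_ne_zero hp), (polyK_order hp).2]
  push_cast; ring_nf

lemma Xe_zpow (k : ℤ) : (Xe Fq) ^ k = HahnSeries.single (-k) (1 : Fq) := by
  have hXe : (Xe Fq) ≠ 0 := HahnSeries.single_ne_zero one_ne_zero
  have hinv : (Xe Fq)⁻¹ = HahnSeries.single (1 : ℤ) (1 : Fq) := by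
    refine (inv_eq_of_mul_eq_one_right ?_)
    rw [Xe, HahnSeries.single_mul_single]
    simp [HahnSeries.single_zero_one]
  induction k using Int.induction_on with
  | zero => simp [HahnSeries.single_zero_one]
  | succ m ih =>
    rw [zpow_add_one₀ hXe, ih, Xe, HahnSeries.single_mul_single]
    ring_nf
  | pred m ih =>
    rw [zpow_sub_one₀ hXe, ih, hinv, HahnSeries.single_mul_single]
    ring_nf

lemma kabs_single_one (a : ℤ) : kabs (HahnSeries.single a (1 : Fq)) = Real.exp (-a) := by
  have : (HahnSeries.single a (1 : Fq)) ≠ 0 := HahnSeries.single_ne_zero one_ne_zero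
  rw [kabs, if_neg this, HahnSeries.order_single one_ne_zero]

lemma kabs_Xe_zpow (k : ℤ) : kabs ((Xe Fq) ^ k) = Real.exp (k : ℝ) := by
  rw [Xe_zpow, kabs_single_one]; norm_num

end Helpers
section Helpers2
variable {Fq : Type} [Field Fq] {n : ℕ}

lemma uMat_mulVec (x : Fin n → LaurentSeries Fq) (v : Fin (n+1) → LaurentSeries Fq) :
    (uMat x).mulVec v = fun i => v i + (if hi : i = 0 then 0 else -x (i.pred hi)) * v 0 := by
  funext i
  have hu : ∀ j, uMat x i j = (if i = j then (1:LaurentSeries Fq) else 0) +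
      (if j = 0 then (if hi : i = 0 then 0 else -x (i.pred hi)) else 0) := by
    intro j
    by_cases hij : i = j
    · subst hij
      by_cases hi : i = 0 <;> simp [uMat, hi]
    · by_cases hi : i = 0 <;> by_cases hj : j = 0 <;>
        simp [uMat, hij, hi, hj]
  simp only [Matrix.mulVec, dotProduct, hu, add_mul, Finset.sum_add_distrib]
  congr 1
  · simp
  · simp [ite_mul]

lemma vec_formula (x : Fin n → LaurentSeries Fq) (f : Fin n → Polynomial Fq)
    (g : Polynomial Fq) (t : ℤ) :
    (gMat Fq n t * uMat x).mulVec (assocVec f g) =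
      Fin.cons (Xe Fq ^ (-(n:ℤ)*t) * polyK Fq g)
        (fun i => Xe Fq ^ t * (polyK Fq (f i) - x i * polyK Fq g)) := by
  rw [← Matrix.mulVec_mulVec, uMat_mulVec]
  funext i
  rw [gMat, Matrix.mulVec_diagonal]
  induction i using Fin.cases with
  | zero => simp [assocVec]
  | succ j =>
    have hj : (j.succ : Fin (n+1)) ≠ 0 := Fin.succ_ne_zero j
    simp only [if_neg hj, dif_neg hj, Fin.cons_succ, Fin.cons_zero, assocVec, Fin.pred_succ]
    ring

lemma supNorm_split (hn : 0 < n) (w : Fin (n+1) → LaurentSeries Fq) :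
    supNorm w = max (kabs (w 0)) (supNorm fun i : Fin n => w i.succ) := by
  haveI : Nonempty (Fin n) := ⟨⟨0, hn⟩⟩
  unfold supNorm
  apply le_antisymm
  · refine ciSup_le fun i => ?_
    induction i using Fin.cases with
    | zero => exact le_max_left _ _
    | succ j =>
      refine le_max_of_le_right ?_
      exact le_ciSup (f := fun i : Fin n => kabs (w i.succ))
        (Set.Finite.bddAbove (Set.finite_range _)) j
  · refine max_le (le_ciSup (f := fun i : Fin (n+1) => kabs (w i))
      (Set.Finite.bddAbove (Set.finite_range _)) 0) (ciSup_le fun j => ?_)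
    exact le_ciSup (f := fun i : Fin (n+1) => kabs (w i))
      (Set.Finite.bddAbove (Set.finite_range _)) j.succ

lemma height_eq (f : Fin n → Polynomial Fq) (g : Polynomial Fq)
    (hZO : ∀ i, kabs (polyK Fq (f i)) ≤ kabs (polyK Fq g)) :
    height f g = kabs (polyK Fq g) := by
  unfold height supNorm
  apply le_antisymm
  · refine ciSup_le fun i => ?_
    induction i using Fin.cases with
    | zero => simp [assocVec]
    | succ j => simpa [assocVec] using hZO j
  · have := le_ciSup (Set.Finite.bddAbove (Set.finite_range fun i => kabs (assocVec f g i))) 0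
    simpa [assocVec] using this

lemma supNorm_const_mul (hn : 0 < n) (c : LaurentSeries Fq) (u : Fin n → LaurentSeries Fq) :
    supNorm (fun i => c * u i) = kabs c * supNorm u := by
  haveI : Nonempty (Fin n) := ⟨⟨0, hn⟩⟩
  unfold supNorm
  rw [Real.mul_iSup_of_nonneg (kabs_nonneg c)]
  exact iSup_congr fun i => by rw [kabs_mul]

end Helpers2
/-- `‖g_t u_x v‖ = H(v) max(e^{-nt}, e^t d(x,v))` and the criterion for
the first coordinate to realize the norm. -/
theorem norm_formula (Fq : Type) [Field Fq] [Fintype Fq] (n : ℕ) (hn : 0 < n)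
    (x : Fin n → LaurentSeries Fq)
    (f : Fin n → Polynomial Fq) (g : Polynomial Fq) (hg : g ≠ 0)
    (hZO : ∀ i, kabs (polyK Fq (f i)) ≤ kabs (polyK Fq g)) (t : ℤ) :
    supNorm ((gMat Fq n t * uMat x).mulVec (assocVec f g)) =
      height f g * max (Real.exp (-(n : ℝ) * t))
        (Real.exp t * supNorm (fun i => x i - ratPt f g i)) ∧
    (0 < supNorm (fun i => x i - ratPt f g i) →
      (kabs ((gMat Fq n t * uMat x).mulVec (assocVec f g) 0) =
          supNorm ((gMat Fq n t * uMat x).mulVec (assocVec f g)) ↔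
        (t : ℝ) ≤ -(1 / ((n : ℝ) + 1)) *
          Real.log (supNorm fun i => x i - ratPt f g i))) := by
  haveI : Nonempty (Fin n) := ⟨⟨0, hn⟩⟩
  set G := polyK Fq g with hG
  have hGne : G ≠ 0 := polyK_ne_zero hg
  have hGpos : 0 < kabs G :=
    lt_of_le_of_ne (kabs_nonneg G) (fun h => hGne (kabs_eq_zero.mp h.symm))
  set D := supNorm (fun i => x i - ratPt f g i) with hD
  have hw := vec_formula x f g t
  have hw0 : kabs ((gMat Fq n t * uMat x).mulVec (assocVec f g) 0)
      = Real.exp (-(n:ℝ)*t) * kabs G := by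
    rw [hw, Fin.cons_zero, kabs_mul, kabs_Xe_zpow]
    push_cast; ring_nf
    rfl
  have hdiff : ∀ i, kabs (polyK Fq (f i) - x i * G) = kabs G * kabs (x i - ratPt f g i) := by
    intro i
    have h1 : polyK Fq (f i) - x i * G = -(G * (x i - ratPt f g i)) := by
      rw [ratPt, ← hG]
      field_simp
      ring
    rw [h1, kabs_neg, kabs_mul]
  have h2 : (⨆ i : Fin n, kabs (polyK Fq (f i) - x i * G)) = kabs G * D := by
    rw [hD]; unfold supNorm
    rw [Real.mul_iSup_of_nonneg (kabs_nonneg G)]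
    exact iSup_congr fun i => hdiff i
  have hDnn : 0 ≤ D := by
    have := h2 ▸ le_ciSup (f := fun i : Fin n => kabs (polyK Fq (f i) - x i * G))
      (Set.Finite.bddAbove (Set.finite_range _)) (Classical.arbitrary (Fin n))
    nlinarith [kabs_nonneg (polyK Fq (f (Classical.arbitrary (Fin n))) -
      x (Classical.arbitrary (Fin n)) * G)]
  have hsup : supNorm ((gMat Fq n t * uMat x).mulVec (assocVec f g))
      = kabs G * max (Real.exp (-(n:ℝ)*t)) (Real.exp t * D) := by
    rw [hw, supNorm_split hn, Fin.cons_zero, kabs_mul, kabs_Xe_zpow]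
    have h3 : (fun i : Fin n =>
        (Fin.cons (Xe Fq ^ (-(n:ℤ)*t) * G)
          (fun i => Xe Fq ^ t * (polyK Fq (f i) - x i * G)) : Fin (n+1) → LaurentSeries Fq)
          i.succ)
        = fun i => Xe Fq ^ t * (polyK Fq (f i) - x i * G) := by
      funext i; rw [Fin.cons_succ]
    rw [h3, supNorm_const_mul hn, kabs_Xe_zpow]
    have h4 : supNorm (fun i => polyK Fq (f i) - x i * G) = kabs G * D := h2
    rw [h4, mul_max_of_nonneg _ _ (le_of_lt hGpos)]
    push_cast
    ring_nf
    rfl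
  refine ⟨by rw [hsup, height_eq f g hZO], fun hDpos => ?_⟩
  have key : kabs ((gMat Fq n t * uMat x).mulVec (assocVec f g) 0) =
      supNorm ((gMat Fq n t * uMat x).mulVec (assocVec f g)) ↔
      Real.exp t * D ≤ Real.exp (-(n:ℝ)*t) := by
    rw [hw0, hsup, mul_comm (Real.exp (-(n:ℝ)*t)) (kabs G),
      mul_right_inj' (ne_of_gt hGpos), eq_comm, max_eq_left_iff]
  rw [key]
  have hlog : Real.exp ↑t * D ≤ Real.exp (-(n:ℝ)*t) ↔
      (t:ℝ) + Real.log D ≤ -(n:ℝ)*t := by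
    rw [← Real.log_le_log_iff (by positivity) (Real.exp_pos _),
      Real.log_mul (Real.exp_ne_zero _) (ne_of_gt hDpos), Real.log_exp, Real.log_exp]
  rw [hlog]
  have hpos : (0:ℝ) < (n:ℝ)+1 := by positivity
  rw [show -(1/((n:ℝ)+1)) * Real.log D = (-Real.log D)/((n:ℝ)+1) by ring,
    le_div_iff₀ hpos]
  constructor <;> intro h <;> nlinarith
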